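/- Let A ∈ {0,1}^{m×n} be a random matrix with i.i.d. entries A_{ij} ~ Bernoulli(p), where 0 < p ≤ 1/2. For k ∈ {0,1,…,n}, let Z_k be the number of vectors x ∈ {0,1}^n with exactly k ones such that Ax ≥ 1 entrywise. Then E[Z_k] ≤ n^k·exp(−m·e^{−2pk}) = exp(k·log n − m·e^{−2pk}). -/

import Mathlib

open Classical Finset

/-- Probability weight of a 0/1 matrix with i.i.d. Bernoulli(p) entries. -/
noncomputable def mWeight (m n : ℕ) (p : ℝ) (ω : Fin m → Fin n → Bool) : ℝ :=
  ∏ i : Fin m, ∏ j : Fin n, if ω i j then p else 1 - p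

/-- Feasibility for the LP: `A x ≥ 1` entrywise. -/
def feasLP {m n : ℕ} (ω : Fin m → Fin n → Bool) (x : Fin n → ℝ) : Prop :=
  ∀ i : Fin m, 1 ≤ ∑ j : Fin n, (if ω i j then (1 : ℝ) else 0) * x j

/-- Feasibility of a 0/1 vector. -/
def feasIP {m n : ℕ} (ω : Fin m → Fin n → Bool) (x : Fin n → Bool) : Prop :=
  feasLP ω fun j => if x j then (1 : ℝ) else 0

/-- `Z_k`: the number of feasible 0/1 vectors with exactly `k` ones. -/
noncomputable def Zk {m n : ℕ} (ω : Fin m → Fin n → Bool) (k : ℕ) : ℕ :=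
  (Finset.univ.filter fun x : Fin n → Bool =>
    feasIP ω x ∧ (Finset.univ.filter fun j : Fin n => x j = true).card = k).card

/-- Expectation of `Z_k` under the i.i.d. Bernoulli(p) matrix distribution. -/
noncomputable def expZk (m n : ℕ) (p : ℝ) (k : ℕ) : ℝ :=
  ∑ ω : Fin m → Fin n → Bool, mWeight m n p ω * (Zk ω k : ℝ)

-- row weight
noncomputable def rW (n : ℕ) (p : ℝ) (r : Fin n → Bool) : ℝ :=
  ∏ j : Fin n, if r j then p else 1 - p

lemma row_all_false (n : ℕ) (p : ℝ) (S : Finset (Fin n)) :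
    ∑ r : Fin n → Bool, rW n p r * (if ∀ j ∈ S, r j = false then (1:ℝ) else 0)
      = (1 - p) ^ S.card := by
  have key : ∀ r : Fin n → Bool,
      rW n p r * (if ∀ j ∈ S, r j = false then (1:ℝ) else 0)
        = ∏ j : Fin n, ((if r j then p else 1 - p) *
            (if j ∈ S then (if r j then 0 else 1) else 1)) := by
    intro r
    rw [Finset.prod_mul_distrib]
    congr 1
    rw [Finset.prod_ite_mem, Finset.univ_inter]
    by_cases h : ∀ j ∈ S, r j = false
    · rw [if_pos h, Finset.prod_eq_one]
      intro j hj; simp [h j hj]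
    · rw [if_neg h]
      push_neg at h
      obtain ⟨j, hj, hrj⟩ := h
      refine (Finset.prod_eq_zero hj ?_).symm
      simp [Bool.not_eq_false] at hrj
      simp [hrj]
  simp only [key]
  have h1 : (∑ r : Fin n → Bool, ∏ j : Fin n, ((if r j then p else 1 - p) *
        (if j ∈ S then (if r j then (0:ℝ) else 1) else 1)))
      = ∏ j : Fin n, ∑ b : Bool, ((if b then p else 1 - p) *
        (if j ∈ S then (if b then (0:ℝ) else 1) else 1)) := by
    have h0 := Finset.sum_prod_piFinset (univ : Finset Bool)
      (fun (j : Fin n) (b : Bool) => (if b then p else 1 - p) *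
        (if j ∈ S then (if b then (0:ℝ) else 1) else 1))
    rw [Fintype.piFinset_univ] at h0
    exact h0
  rw [h1]
  have each : ∀ j : Fin n, ∑ b : Bool, ((if b then p else 1 - p) *
      (if j ∈ S then (if b then (0:ℝ) else 1) else 1)) = if j ∈ S then 1 - p else 1 := by
    intro j
    rw [Fintype.sum_bool]
    by_cases h : j ∈ S <;> simp [h]
  simp only [each]
  rw [Finset.prod_ite_mem, Finset.univ_inter, Finset.prod_const]

lemma row_total (n : ℕ) (p : ℝ) : ∑ r : Fin n → Bool, rW n p r = 1 := by
  have := row_all_false n p ∅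
  simpa using this

lemma row_hit (n : ℕ) (p : ℝ) (S : Finset (Fin n)) :
    ∑ r : Fin n → Bool, rW n p r * (if ∃ j ∈ S, r j = true then (1:ℝ) else 0)
      = 1 - (1 - p) ^ S.card := by
  have key : ∀ r : Fin n → Bool,
      (if ∃ j ∈ S, r j = true then (1:ℝ) else 0)
        = 1 - (if ∀ j ∈ S, r j = false then (1:ℝ) else 0) := by
    intro r
    by_cases h : ∃ j ∈ S, r j = true
    · rw [if_pos h, if_neg, sub_zero]
      obtain ⟨j, hj, hrj⟩ := h
      intro hall; rw [hall j hj] at hrj; exact Bool.false_ne_true hrj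
    · rw [if_neg h, if_pos, sub_self]
      push_neg at h
      intro j hj; simpa [Bool.not_eq_true] using h j hj
  simp only [key, mul_sub, mul_one]
  rw [Finset.sum_sub_distrib, row_total, row_all_false]

lemma feasIP_iff {m n : ℕ} (ω : Fin m → Fin n → Bool) (x : Fin n → Bool) :
    feasIP ω x ↔ ∀ i : Fin m,
      ∃ j ∈ (Finset.univ.filter fun j : Fin n => x j = true), ω i j = true := by
  unfold feasIP feasLP
  apply forall_congr'
  intro i
  have hsum : ∑ j : Fin n, (if ω i j then (1 : ℝ) else 0) * (if x j then 1 else 0)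
      = ((Finset.univ.filter fun j : Fin n => ω i j = true ∧ x j = true).card : ℝ) := by
    rw [Finset.card_filter]
    push_cast
    apply Finset.sum_congr rfl
    intro j _
    by_cases h1 : ω i j <;> by_cases h2 : x j <;> simp [h1, h2]
  rw [hsum]
  rw [← Nat.cast_one (R := ℝ), Nat.cast_le, Nat.one_le_iff_ne_zero,
    ← Nat.pos_iff_ne_zero, Finset.card_pos]
  constructor
  · rintro ⟨j, hj⟩
    simp only [Finset.mem_filter, Finset.mem_univ, true_and] at hj
    exact ⟨j, by simp [hj.2], hj.1⟩
  · rintro ⟨j, hj1, hj2⟩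
    simp only [Finset.mem_filter, Finset.mem_univ, true_and] at hj1
    exact ⟨j, by simp [hj1, hj2]⟩

lemma feas_prob (m n : ℕ) (p : ℝ) (x : Fin n → Bool) :
    ∑ ω : Fin m → Fin n → Bool, mWeight m n p ω * (if feasIP ω x then (1:ℝ) else 0)
      = (1 - (1 - p) ^ (Finset.univ.filter fun j : Fin n => x j = true).card) ^ m := by
  set S := Finset.univ.filter fun j : Fin n => x j = true with hS
  have key : ∀ ω : Fin m → Fin n → Bool,
      mWeight m n p ω * (if feasIP ω x then (1:ℝ) else 0)
        = ∏ i : Fin m, (rW n p (ω i) * (if ∃ j ∈ S, ω i j = true then (1:ℝ) else 0)) := by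
    intro ω
    rw [Finset.prod_mul_distrib]
    unfold mWeight rW
    congr 1
    rw [feasIP_iff]
    by_cases h : ∀ i : Fin m, ∃ j ∈ S, ω i j = true
    · rw [if_pos h, Finset.prod_eq_one]
      intro i _; rw [if_pos (h i)]
    · rw [if_neg h]
      push_neg at h
      obtain ⟨i, hi⟩ := h
      refine (Finset.prod_eq_zero (Finset.mem_univ i) ?_).symm
      rw [if_neg]
      push_neg
      exact hi
  simp only [key]
  have h1 : (∑ ω : Fin m → Fin n → Bool, ∏ i : Fin m,
        (rW n p (ω i) * (if ∃ j ∈ S, ω i j = true then (1:ℝ) else 0)))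
      = ∏ i : Fin m, ∑ r : Fin n → Bool,
        (rW n p r * (if ∃ j ∈ S, r j = true then (1:ℝ) else 0)) := by
    have h0 := Finset.sum_prod_piFinset (univ : Finset (Fin n → Bool))
      (fun (i : Fin m) (r : Fin n → Bool) =>
        rW n p r * (if ∃ j ∈ S, r j = true then (1:ℝ) else 0))
    rw [Fintype.piFinset_univ] at h0
    exact h0
  rw [h1]
  simp only [row_hit n p S]
  rw [Finset.prod_const, Finset.card_univ, Fintype.card_fin]

lemma expZk_eq (m n : ℕ) (p : ℝ) (k : ℕ) :
    expZk m n p k = ((Finset.univ.filter fun x : Fin n → Bool =>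
        (Finset.univ.filter fun j : Fin n => x j = true).card = k).card : ℝ)
      * (1 - (1 - p) ^ k) ^ m := by
  unfold expZk Zk
  have step : ∀ ω : Fin m → Fin n → Bool,
      mWeight m n p ω * (((Finset.univ.filter fun x : Fin n → Bool =>
        feasIP ω x ∧ (Finset.univ.filter fun j : Fin n => x j = true).card = k).card : ℕ) : ℝ)
      = ∑ x : Fin n → Bool, (if (Finset.univ.filter fun j : Fin n => x j = true).card = k
          then mWeight m n p ω * (if feasIP ω x then (1:ℝ) else 0) else 0) := by
    intro ω
    rw [Finset.card_filter]
    push_cast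
    rw [Finset.mul_sum]
    apply Finset.sum_congr rfl
    intro x _
    by_cases h1 : feasIP ω x <;> by_cases h2 :
      (Finset.univ.filter fun j : Fin n => x j = true).card = k <;> simp [h1, h2]
  simp only [step]
  rw [Finset.sum_comm]
  have inner : ∀ x : Fin n → Bool,
      (∑ ω : Fin m → Fin n → Bool, if (Finset.univ.filter fun j : Fin n => x j = true).card = k
          then mWeight m n p ω * (if feasIP ω x then (1:ℝ) else 0) else 0)
      = if (Finset.univ.filter fun j : Fin n => x j = true).card = k
          then (1 - (1 - p) ^ k) ^ m else 0 := by
    intro x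
    by_cases h : (Finset.univ.filter fun j : Fin n => x j = true).card = k
    · simp only [if_pos h]
      rw [feas_prob m n p x, h]
    · simp [h]
  simp only [inner]
  rw [← Finset.sum_filter, Finset.sum_const, nsmul_eq_mul]

/-- For `0 < p ≤ 1/2`,
`E[Z_k] ≤ n^k exp(-m e^{-2pk}) = exp(k log n - m e^{-2pk})`. -/
theorem stmt4 (m n : ℕ) (hm : 1 ≤ m) (hn : 1 ≤ n) (p : ℝ) (hp : 0 < p ∧ p ≤ 1 / 2)
    (k : ℕ) (hk : k ≤ n) :
    expZk m n p k ≤ (n : ℝ) ^ k * Real.exp (-(m : ℝ) * Real.exp (-2 * p * k)) ∧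
    (n : ℝ) ^ k * Real.exp (-(m : ℝ) * Real.exp (-2 * p * k)) =
      Real.exp ((k : ℝ) * Real.log n - (m : ℝ) * Real.exp (-2 * p * k)) := by
  obtain ⟨hp0, hp2⟩ := hp
  have hnpos : (0:ℝ) < n := by exact_mod_cast Nat.lt_of_lt_of_le Nat.zero_lt_one hn
  constructor
  · -- inequality part
    rw [expZk_eq]
    set N := (Finset.univ.filter fun x : Fin n → Bool =>
        (Finset.univ.filter fun j : Fin n => x j = true).card = k).card with hNdef
    -- count bound
    have hcount : N ≤ n ^ k := by
      have hinj : N ≤ (Finset.powersetCard k (Finset.univ : Finset (Fin n))).card := by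
        apply Finset.card_le_card_of_injOn
          (fun x : Fin n → Bool => Finset.univ.filter fun j : Fin n => x j = true)
        · intro x hx
          simp only [Finset.mem_coe, Finset.mem_filter, Finset.mem_univ, true_and] at hx
          rw [Finset.mem_coe, Finset.mem_powersetCard_univ]
          exact hx
        · intro x _ y _ hxy
          simp only at hxy
          funext j
          have h := Finset.ext_iff.mp hxy j
          simp only [Finset.mem_filter, Finset.mem_univ, true_and] at h
          cases hxj : x j <;> cases hyj : y j <;> simp_all
      calc N ≤ (Finset.powersetCard k (Finset.univ : Finset (Fin n))).card := hinj
        _ = n.choose k := by rw [Finset.card_powersetCard, Finset.card_univ, Fintype.card_fin]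
        _ ≤ n ^ k := Nat.choose_le_pow n k
    have hNle : (N : ℝ) ≤ (n:ℝ) ^ k := by exact_mod_cast hcount
    -- probability bound
    have h1p0 : (0:ℝ) ≤ 1 - p := by linarith
    have h1p1 : (1:ℝ) - p ≤ 1 := by linarith
    have hpowle1 : (1 - p) ^ k ≤ 1 := pow_le_one₀ h1p0 h1p1
    have hq0 : (0:ℝ) ≤ 1 - (1 - p) ^ k := by linarith
    have hq1 : 1 - (1 - p) ^ k ≤ Real.exp (-(1 - p) ^ k) := by
      have := Real.add_one_le_exp (-(1 - p) ^ k)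
      linarith
    have hqm : (1 - (1 - p) ^ k) ^ m ≤ Real.exp (-(m:ℝ) * (1 - p) ^ k) := by
      calc (1 - (1 - p) ^ k) ^ m ≤ (Real.exp (-(1 - p) ^ k)) ^ m :=
            pow_le_pow_left₀ hq0 hq1 m
        _ = Real.exp (-(m:ℝ) * (1 - p) ^ k) := by
            rw [← Real.exp_nat_mul]
            ring_nf
    have hep : Real.exp (-2 * p) ≤ 1 - p := by
      have h1 : 1 + 2 * p ≤ Real.exp (2 * p) := by
        have := Real.add_one_le_exp (2 * p); linarith
      have h2 : Real.exp (-2 * p) * Real.exp (2 * p) = 1 := by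
        rw [← Real.exp_add]
        norm_num
      nlinarith [Real.exp_pos (2 * p), Real.exp_pos (-2 * p)]
    have hE : Real.exp (-2 * p * k) ≤ (1 - p) ^ k := by
      calc Real.exp (-2 * p * k) = (Real.exp (-2 * p)) ^ k := by
            rw [show (-2 * p * (k:ℝ)) = (k:ℝ) * (-2 * p) by ring, Real.exp_nat_mul]
        _ ≤ (1 - p) ^ k := pow_le_pow_left₀ (le_of_lt (Real.exp_pos _)) hep k
    have hfinal : Real.exp (-(m:ℝ) * (1 - p) ^ k) ≤ Real.exp (-(m:ℝ) * Real.exp (-2 * p * k)) := by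
      apply Real.exp_le_exp.mpr
      have hm0 : (0:ℝ) ≤ (m:ℝ) := Nat.cast_nonneg m
      nlinarith
    exact mul_le_mul hNle (hqm.trans hfinal) (pow_nonneg hq0 m) (by positivity)
  · rw [show (n:ℝ) ^ k = Real.exp ((k:ℝ) * Real.log n) by
      rw [← Real.log_pow, Real.exp_log (by positivity)]]
    rw [← Real.exp_add]
    ring_nf
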